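/- Let ε > 0 and define f : (0, ∞) → ℝ by f(u) = exp(−τ_ε(u)), where τ_ε(u) = (2/√u)·arctan(ε/√u). Then f is infinitely differentiable on (0, ∞), and for every natural number n the n-th derivative of f tends to 0 as u → 0 from the right: lim_{u→0+} f^{(n)}(u) = 0. -/

import Mathlib

open Real Set Filter Topology

/-- Functions generated by `u`, `(√u)⁻¹`, `arctan (ε/√u)`, `(u+ε²)⁻¹`, constants,
addition and multiplication. -/
inductive Nice (ε : ℝ) : (ℝ → ℝ) → Prop
  | const (c : ℝ) : Nice ε (fun _ => c)
  | idf : Nice ε (fun u => u)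
  | sq : Nice ε (fun u => (Real.sqrt u)⁻¹)
  | atan : Nice ε (fun u => Real.arctan (ε / Real.sqrt u))
  | recp : Nice ε (fun u => (u + ε ^ 2)⁻¹)
  | add {f g} : Nice ε f → Nice ε g → Nice ε (fun u => f u + g u)
  | mul {f g} : Nice ε f → Nice ε g → Nice ε (fun u => f u * g u)

lemma nice_hasDerivAt {ε : ℝ} (hε : 0 < ε) {h : ℝ → ℝ} (hh : Nice ε h) :
    ∃ h', Nice ε h' ∧ ∀ u ∈ Set.Ioi (0 : ℝ), HasDerivAt h (h' u) u := by
  induction hh with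
  | const c =>
      exact ⟨fun _ => 0, Nice.const 0, fun u _ => hasDerivAt_const u c⟩
  | idf =>
      exact ⟨fun _ => 1, Nice.const 1, fun u _ => hasDerivAt_id u⟩
  | sq =>
      refine ⟨fun u => (-(1/2)) * ((Real.sqrt u)⁻¹ * ((Real.sqrt u)⁻¹ * (Real.sqrt u)⁻¹)),
        Nice.mul (Nice.const (-(1/2))) (Nice.mul Nice.sq (Nice.mul Nice.sq Nice.sq)), ?_⟩
      intro u hu
      have hu0 : (0:ℝ) < u := hu
      have hs : Real.sqrt u ≠ 0 := (Real.sqrt_pos.2 hu0).ne'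
      have := (Real.hasDerivAt_sqrt hu0.ne').inv hs
      refine this.congr_deriv ?_
      have hsq : Real.sqrt u ^ 2 = u := Real.sq_sqrt hu0.le
      field_simp
  | atan =>
      refine ⟨fun u => (-(ε/2)) * ((Real.sqrt u)⁻¹ * (u + ε ^ 2)⁻¹),
        Nice.mul (Nice.const (-(ε/2))) (Nice.mul Nice.sq Nice.recp), ?_⟩
      intro u hu
      have hu0 : (0:ℝ) < u := hu
      have hs : Real.sqrt u ≠ 0 := (Real.sqrt_pos.2 hu0).ne'
      have hinner : HasDerivAt (fun u => ε / Real.sqrt u)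
          (ε * (-(1 / (2 * Real.sqrt u)) / Real.sqrt u ^ 2)) u := by
        have := ((Real.hasDerivAt_sqrt hu0.ne').inv hs).const_mul ε
        simpa [div_eq_mul_inv, mul_comm] using this
      have := (Real.hasDerivAt_arctan (ε / Real.sqrt u)).comp u hinner
      refine this.congr_deriv ?_
      have hsq : Real.sqrt u ^ 2 = u := Real.sq_sqrt hu0.le
      have hue : u + ε ^ 2 ≠ 0 := by positivity
      have h1 : 1 + (ε / Real.sqrt u) ^ 2 ≠ 0 := by positivity
      field_simp [Function.comp]
      ring_nf
      rw [hsq]; ring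
  | recp =>
      refine ⟨fun u => (-1) * ((u + ε ^ 2)⁻¹ * (u + ε ^ 2)⁻¹),
        Nice.mul (Nice.const (-1)) (Nice.mul Nice.recp Nice.recp), ?_⟩
      intro u hu
      have hu0 : (0:ℝ) < u := hu
      have hue : u + ε ^ 2 ≠ 0 := by positivity
      have := ((hasDerivAt_id u).add_const (ε ^ 2)).inv hue
      refine this.congr_deriv ?_
      simp only [id]
      field_simp
  | add hf hg ihf ihg =>
      obtain ⟨f', hf', hdf⟩ := ihf
      obtain ⟨g', hg', hdg⟩ := ihg
      exact ⟨fun u => f' u + g' u, Nice.add hf' hg',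
        fun u hu => (hdf u hu).add (hdg u hu)⟩
  | mul hf hg ihf ihg =>
      obtain ⟨f', hf', hdf⟩ := ihf
      obtain ⟨g', hg', hdg⟩ := ihg
      rename_i f g
      refine ⟨fun u => f' u * g u + f u * g' u,
        Nice.add (Nice.mul hf' hg) (Nice.mul hf hg'), fun u hu => ?_⟩
      exact (hdf u hu).mul (hdg u hu)

lemma nice_bound {ε : ℝ} (hε : 0 < ε) {h : ℝ → ℝ} (hh : Nice ε h) :
    ∃ C : ℝ, ∃ k : ℕ, 0 ≤ C ∧
      ∀ u ∈ Set.Ioo (0 : ℝ) 1, |h u| ≤ C * ((Real.sqrt u)⁻¹) ^ k := by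
  have hx1 : ∀ u ∈ Set.Ioo (0:ℝ) 1, 1 ≤ (Real.sqrt u)⁻¹ := by
    intro u hu
    have h1 : Real.sqrt u ≤ 1 := by
      rw [show (1:ℝ) = Real.sqrt 1 by simp]
      exact Real.sqrt_le_sqrt hu.2.le
    have h2 : 0 < Real.sqrt u := Real.sqrt_pos.2 hu.1
    exact one_le_inv_iff₀.mpr ⟨h2, h1⟩
  have hxpos : ∀ u ∈ Set.Ioo (0:ℝ) 1, 0 < (Real.sqrt u)⁻¹ := fun u hu =>
    lt_of_lt_of_le one_pos (hx1 u hu)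
  induction hh with
  | const c =>
      exact ⟨|c|, 0, abs_nonneg c, fun u hu => by simp⟩
  | idf =>
      refine ⟨1, 0, zero_le_one, fun u hu => ?_⟩
      rw [abs_of_pos hu.1]
      simpa using hu.2.le
  | sq =>
      refine ⟨1, 1, zero_le_one, fun u hu => ?_⟩
      rw [abs_of_pos (hxpos u hu)]
      simp
  | atan =>
      refine ⟨2, 0, by norm_num, fun u hu => ?_⟩
      have := Real.arctan_lt_pi_div_two (ε / Real.sqrt u)
      have h2 := Real.neg_pi_div_two_lt_arctan (ε / Real.sqrt u)
      rw [abs_le]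
      simp only [pow_zero, mul_one]
      constructor <;> linarith [Real.pi_lt_d2]
  | recp =>
      refine ⟨(ε ^ 2)⁻¹, 0, by positivity, fun u hu => ?_⟩
      have h1 : (0:ℝ) < ε ^ 2 := by positivity
      have h2 : (0:ℝ) < u + ε ^ 2 := by nlinarith [hu.1]
      rw [abs_of_pos (inv_pos.2 h2)]
      simp only [pow_zero, mul_one]
      exact inv_anti₀ h1 (by linarith [hu.1])
  | add hf hg ihf ihg =>
      obtain ⟨C1, k1, hC1, hb1⟩ := ihf
      obtain ⟨C2, k2, hC2, hb2⟩ := ihg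
      refine ⟨C1 + C2, k1 + k2, by positivity, fun u hu => ?_⟩
      have hx := hx1 u hu
      have hxp := hxpos u hu
      have e1 : ((Real.sqrt u)⁻¹) ^ k1 ≤ ((Real.sqrt u)⁻¹) ^ (k1 + k2) :=
        pow_le_pow_right₀ hx (Nat.le_add_right _ _)
      have e2 : ((Real.sqrt u)⁻¹) ^ k2 ≤ ((Real.sqrt u)⁻¹) ^ (k1 + k2) :=
        pow_le_pow_right₀ hx (Nat.le_add_left _ _)
      calc _ ≤ _ := abs_add_le _ _
        _ ≤ C1 * ((Real.sqrt u)⁻¹) ^ (k1 + k2) + C2 * ((Real.sqrt u)⁻¹) ^ (k1 + k2) := by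
            gcongr
            exacts [le_trans (hb1 u hu) (mul_le_mul_of_nonneg_left e1 hC1),
              le_trans (hb2 u hu) (mul_le_mul_of_nonneg_left e2 hC2)]
        _ = (C1 + C2) * ((Real.sqrt u)⁻¹) ^ (k1 + k2) := by ring
  | mul hf hg ihf ihg =>
      obtain ⟨C1, k1, hC1, hb1⟩ := ihf
      obtain ⟨C2, k2, hC2, hb2⟩ := ihg
      refine ⟨C1 * C2, k1 + k2, by positivity, fun u hu => ?_⟩
      rw [abs_mul]
      calc |_| * |_| ≤ (C1 * ((Real.sqrt u)⁻¹) ^ k1) * (C2 * ((Real.sqrt u)⁻¹) ^ k2) := by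
            exact mul_le_mul (hb1 u hu) (hb2 u hu) (abs_nonneg _)
              (by positivity)
        _ = (C1 * C2) * ((Real.sqrt u)⁻¹) ^ (k1 + k2) := by rw [pow_add]; ring

/-- For `ε > 0`, the function `f(u) = exp(−τ_ε(u))` with
`τ_ε(u) = (2/√u)·arctan(ε/√u)` is `C^∞` on `(0, ∞)`, and every iterated derivative
(taken within `(0, ∞)`) tends to `0` as `u → 0⁺`. -/
theorem stmt8 (ε : ℝ) (hε : 0 < ε) :
    ContDiffOn ℝ (⊤ : ℕ∞)
      (fun u : ℝ => Real.exp (-(2 / Real.sqrt u * Real.arctan (ε / Real.sqrt u))))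
      (Set.Ioi 0)
    ∧ ∀ n : ℕ,
        Filter.Tendsto
          (iteratedDerivWithin n
            (fun u : ℝ => Real.exp (-(2 / Real.sqrt u * Real.arctan (ε / Real.sqrt u))))
            (Set.Ioi 0))
          (nhdsWithin 0 (Set.Ioi 0)) (nhds 0) := by
  set G : ℝ → ℝ := fun u => 2 / Real.sqrt u * Real.arctan (ε / Real.sqrt u) with hG
  set f : ℝ → ℝ := fun u => Real.exp (-(G u)) with hf
  -- G is Nice
  have hGnice : Nice ε G := by
    have : G = fun u => ((fun _ : ℝ => (2:ℝ)) u * (Real.sqrt u)⁻¹) *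
        Real.arctan (ε / Real.sqrt u) := by
      funext u; simp [hG, div_eq_mul_inv]
    rw [this]
    exact Nice.mul (Nice.mul (Nice.const 2) Nice.sq) Nice.atan
  obtain ⟨G', hG'nice, hG'⟩ := nice_hasDerivAt hε hGnice
  -- derivative of f
  have hfderiv : ∀ u ∈ Set.Ioi (0:ℝ), HasDerivAt f (Real.exp (-(G u)) * (-(G' u))) u := by
    intro u hu
    exact ((hG' u hu).neg).exp
  -- smoothness
  have hsmooth : ContDiffOn ℝ (⊤ : ℕ∞) f (Set.Ioi 0) := by
    intro u hu
    have hu0 : (0:ℝ) < u := hu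
    have hs0 : Real.sqrt u ≠ 0 := (Real.sqrt_pos.2 hu0).ne'
    have hsq : ContDiffAt ℝ (⊤ : ℕ∞) Real.sqrt u := Real.contDiffAt_sqrt hu0.ne'
    have h1 : ContDiffAt ℝ (⊤ : ℕ∞) (fun u => 2 / Real.sqrt u) u :=
      contDiffAt_const.div hsq hs0
    have h2 : ContDiffAt ℝ (⊤ : ℕ∞) (fun u => ε / Real.sqrt u) u :=
      contDiffAt_const.div hsq hs0
    have h3 : ContDiffAt ℝ (⊤ : ℕ∞) (fun u => Real.arctan (ε / Real.sqrt u)) u :=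
      (Real.contDiff_arctan.contDiffAt).comp u h2
    exact ((Real.contDiff_exp.contDiffAt).comp u ((h1.mul h3).neg)).contDiffWithinAt
  refine ⟨hsmooth, fun n => ?_⟩
  -- structure of iterated derivatives
  have key : ∀ n : ℕ, ∃ h : ℝ → ℝ, Nice ε h ∧
      ∀ u ∈ Set.Ioi (0:ℝ), iteratedDerivWithin n f (Set.Ioi 0) u = h u * f u := by
    intro n
    induction n with
    | zero =>
        exact ⟨fun _ => 1, Nice.const 1, fun u hu => by simp⟩
    | succ n ih =>
        obtain ⟨h, hhnice, hh⟩ := ih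
        obtain ⟨h', hh'nice, hd⟩ := nice_hasDerivAt hε hhnice
        refine ⟨fun u => h' u + h u * ((fun _ : ℝ => (-1:ℝ)) u * G' u),
          Nice.add hh'nice (Nice.mul hhnice (Nice.mul (Nice.const (-1)) hG'nice)),
          fun u hu => ?_⟩
        rw [iteratedDerivWithin_succ,
          derivWithin_of_isOpen isOpen_Ioi hu]
        have heq : iteratedDerivWithin n f (Set.Ioi 0) =ᶠ[nhds u] fun u => h u * f u :=
          Filter.eventuallyEq_of_mem (isOpen_Ioi.mem_nhds hu) hh
        rw [heq.deriv_eq, HasDerivAt.deriv (f := fun u => h u * f u) ((hd u hu).mul (hfderiv u hu))]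
        ring
  obtain ⟨h, hhnice, hh⟩ := key n
  obtain ⟨C, k, hC, hbound⟩ := nice_bound hε hhnice
  set c : ℝ := 2 * Real.arctan ε with hc
  have hcpos : 0 < c := by
    have h0 : Real.arctan 0 < Real.arctan ε := Real.arctan_strictMono hε
    rw [Real.arctan_zero] at h0
    positivity
  -- the comparison function
  have hxTendsto : Filter.Tendsto (fun u => (Real.sqrt u)⁻¹)
      (nhdsWithin 0 (Set.Ioi 0)) Filter.atTop := by
    apply tendsto_inv_nhdsGT_zero.comp
    rw [tendsto_nhdsWithin_iff]
    constructor
    · have : Filter.Tendsto Real.sqrt (nhds 0) (nhds (Real.sqrt 0)) :=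
        Real.continuous_sqrt.tendsto 0
      simpa using this.mono_left nhdsWithin_le_nhds
    · filter_upwards [self_mem_nhdsWithin] with u hu
      exact Real.sqrt_pos.2 hu
  have hφ : Filter.Tendsto
      (fun u => C * (((Real.sqrt u)⁻¹) ^ (k:ℝ) * Real.exp (-c * (Real.sqrt u)⁻¹)))
      (nhdsWithin 0 (Set.Ioi 0)) (nhds 0) := by
    have := (tendsto_rpow_mul_exp_neg_mul_atTop_nhds_zero (k:ℝ) c hcpos).comp hxTendsto
    simpa using this.const_mul C
  rw [tendsto_zero_iff_abs_tendsto_zero]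
  apply squeeze_zero' (Filter.Eventually.of_forall fun u => abs_nonneg _) _ hφ
  have hmem : Set.Ioo (0:ℝ) 1 ∈ nhdsWithin (0:ℝ) (Set.Ioi 0) := by
    exact Ioo_mem_nhdsGT_of_mem (by norm_num : (0:ℝ) ∈ Set.Ico (0:ℝ) 1)
  filter_upwards [hmem] with u hu
  have hu0 : (0:ℝ) < u := hu.1
  have hx0 : 0 < (Real.sqrt u)⁻¹ := inv_pos.2 (Real.sqrt_pos.2 hu0)
  -- lower bound for G
  have hGlower : c * (Real.sqrt u)⁻¹ ≤ G u := by
    have hs1 : Real.sqrt u ≤ 1 := by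
      rw [show (1:ℝ) = Real.sqrt 1 by simp]
      exact Real.sqrt_le_sqrt hu.2.le
    have harc : Real.arctan ε ≤ Real.arctan (ε / Real.sqrt u) := by
      apply Real.arctan_strictMono.monotone
      rw [le_div_iff₀ (Real.sqrt_pos.2 hu0)]
      nlinarith [hε.le]
    have h2x : 2 / Real.sqrt u = 2 * (Real.sqrt u)⁻¹ := by rw [div_eq_mul_inv]
    calc c * (Real.sqrt u)⁻¹ = 2 * (Real.sqrt u)⁻¹ * Real.arctan ε := by rw [hc]; ring
      _ ≤ 2 * (Real.sqrt u)⁻¹ * Real.arctan (ε / Real.sqrt u) := by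
          apply mul_le_mul_of_nonneg_left harc (by positivity)
      _ = G u := by simp only [hG]; rw [h2x]
  have hfle : f u ≤ Real.exp (-c * (Real.sqrt u)⁻¹) := by
    apply Real.exp_le_exp.2
    linarith
  rw [hh u hu0]
  rw [abs_mul]
  have hfabs : |f u| = f u := abs_of_pos (Real.exp_pos _)
  rw [hfabs]
  calc |h u| * f u ≤ (C * ((Real.sqrt u)⁻¹) ^ k) * Real.exp (-c * (Real.sqrt u)⁻¹) :=
        mul_le_mul (hbound u hu) hfle (le_of_lt (Real.exp_pos _)) (by positivity)
    _ = C * (((Real.sqrt u)⁻¹) ^ (k:ℝ) * Real.exp (-c * (Real.sqrt u)⁻¹)) := by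
        rw [Real.rpow_natCast]; ring
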